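/- Let t ∈ [0, 1) and set x₀ = cos(πt), x_{k+1} = g(x_k). Then for every k ≥ 0, x_k = cos(π·frac(2^k · t)). In particular, for x ∈ (−1, 1] and t = arccos(x)/π, the iterates starting from x₀ = x satisfy x_k = cos(π·frac(2^k · arccos(x)/π)). -/
import Mathlib


open Real

/-- One step of the Quantum Function-value Binary Expansion iteration:
`g(y) = 2y² − 1` if `y > 0` and `g(y) = 1 − 2y²` if `y ≤ 0`. -/
noncomputable def binExpStep (y : ℝ) : ℝ := if 0 < y then 2 * y ^ 2 - 1 else 1 - 2 * y ^ 2

lemma binExpStep_cos {s : ℝ} (hs : s ∈ Set.Ico (0 : ℝ) 1) :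
    binExpStep (Real.cos (Real.pi * s)) = Real.cos (Real.pi * Int.fract (2 * s)) := by
  obtain ⟨h0, h1⟩ := hs
  rcases lt_or_ge s (1/2) with h | h
  · have hpos : 0 < Real.cos (Real.pi * s) := by
      apply Real.cos_pos_of_mem_Ioo
      constructor
      · nlinarith [Real.pi_pos]
      · nlinarith [Real.pi_pos]
    have hfr : Int.fract (2 * s) = 2 * s := Int.fract_eq_self.2 ⟨by linarith, by linarith⟩
    rw [binExpStep, if_pos hpos, hfr]
    rw [show Real.pi * (2 * s) = 2 * (Real.pi * s) by ring, Real.cos_two_mul]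
  · have hnp : Real.cos (Real.pi * s) ≤ 0 := by
      apply Real.cos_nonpos_of_pi_div_two_le_of_le
      · nlinarith [Real.pi_pos]
      · nlinarith [Real.pi_pos]
    have hfr : Int.fract (2 * s) = 2 * s - 1 := by
      have h2 : (2 * s + ((-1 : ℤ) : ℝ)) = 2 * s - 1 := by push_cast; ring
      rw [← Int.fract_add_intCast (2 * s) (-1), h2,
        Int.fract_eq_self.2 ⟨by linarith, by linarith⟩]
    rw [binExpStep, if_neg (not_lt.2 hnp), hfr]
    rw [show Real.pi * (2 * s - 1) = 2 * (Real.pi * s) - Real.pi by ring,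
      Real.cos_sub_pi, Real.cos_two_mul]
    ring

/-- For `t ∈ [0,1)` and the iteration `x₀ = cos(πt)`, `x_{k+1} = g(x_k)`, every iterate
satisfies `x_k = cos(π·frac(2^k·t))`.  In particular, for `x ∈ (−1,1]` and
`t = arccos(x)/π`, the iterates starting from `x₀ = x` satisfy
`x_k = cos(π·frac(2^k·arccos(x)/π))`. -/
theorem binExp_iterates_eq_cos_fract :
    (∀ t : ℝ, t ∈ Set.Ico (0 : ℝ) 1 → ∀ xs : ℕ → ℝ, xs 0 = Real.cos (Real.pi * t) →
        (∀ k, xs (k + 1) = binExpStep (xs k)) →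
        ∀ k, xs k = Real.cos (Real.pi * Int.fract ((2 : ℝ) ^ k * t))) ∧
      (∀ x : ℝ, x ∈ Set.Ioc (-1 : ℝ) 1 → ∀ xs : ℕ → ℝ, xs 0 = x →
        (∀ k, xs (k + 1) = binExpStep (xs k)) →
        ∀ k, xs k = Real.cos (Real.pi * Int.fract ((2 : ℝ) ^ k * (Real.arccos x / Real.pi)))) := by
  have main : ∀ t : ℝ, t ∈ Set.Ico (0 : ℝ) 1 → ∀ xs : ℕ → ℝ, xs 0 = Real.cos (Real.pi * t) →
      (∀ k, xs (k + 1) = binExpStep (xs k)) →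
      ∀ k, xs k = Real.cos (Real.pi * Int.fract ((2 : ℝ) ^ k * t)) := by
    intro t ht xs h0 hstep k
    induction k with
    | zero =>
      simpa [Int.fract_eq_self.2 ⟨ht.1, ht.2⟩] using h0
    | succ k ih =>
      have hfs : Int.fract ((2:ℝ)^k * t) ∈ Set.Ico (0 : ℝ) 1 :=
        ⟨Int.fract_nonneg _, Int.fract_lt_one _⟩
      rw [hstep k, ih, binExpStep_cos hfs]
      congr 1
      have : (2:ℝ) * Int.fract ((2:ℝ)^k * t) = 2^(k+1) * t + (-2 * ⌊(2:ℝ)^k * t⌋ : ℤ) := by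
        rw [Int.fract]; push_cast; ring
      rw [this, Int.fract_add_intCast]
  refine ⟨main, ?_⟩
  intro x hx xs h0 hstep
  have hpi := Real.pi_pos
  have ht : Real.arccos x / Real.pi ∈ Set.Ico (0 : ℝ) 1 := by
    constructor
    · exact div_nonneg (Real.arccos_nonneg x) hpi.le
    · rw [div_lt_one hpi]
      rcases lt_or_eq_of_le (Real.arccos_le_pi x) with h | h
      · exact h
      · exfalso
        have : x = -1 := by
          have := Real.cos_arccos hx.1.le hx.2
          rw [h, Real.cos_pi] at this; linarith
        linarith [hx.1]
  apply main _ ht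
  · rw [h0, mul_div_cancel₀ _ hpi.ne', Real.cos_arccos hx.1.le hx.2]
  · exact hstep
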